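/- Let Σ_h = U_K Λ_K U_Kᴴ with U_Kᴴ U_K = I_K and Λ_K = diag(λ_1,...,λ_K), λ_k > 0. Let S ∈ {0,1}^{K×Q} be a selection matrix with exactly one 1 per column, and let n_k = number of 1's in row k, so S Sᴴ = diag(n_1,...,n_K). Then for W = U_K S, the trace of Σ_h - Σ_h W (Wᴴ Σ_h W + σ² I_Q)⁻¹ Wᴴ Σ_h equals Σ_{k=1}^K λ_k σ² / (n_k λ_k + σ²). -/

import Mathlib

open Matrix

/-- with `Σ_h = U_K Λ_K U_Kᴴ` and `W = U_K S` for a 0-1 selection matrix `S`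
with exactly one `1` per column (column `q` selecting row `sel q`), and `n_k` the number of
`1`'s in row `k`, the trace of `Σ_h - Σ_h W (Wᴴ Σ_h W + σ² I_Q)⁻¹ Wᴴ Σ_h` equals
`∑_k λ_k σ²/(n_k λ_k + σ²)`. -/
theorem stmt7 {M K Q : ℕ} (hK : 0 < K) (hQ : 0 < Q)
    (U : Matrix (Fin M) (Fin K) ℂ) (hU : Uᴴ * U = 1)
    (lam : Fin K → ℝ) (hlam : ∀ k, 0 < lam k)
    (σ2 : ℝ) (hσ : 0 < σ2)
    (Sh : Matrix (Fin M) (Fin M) ℂ)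
    (hSh : Sh = U * Matrix.diagonal (fun k => (lam k : ℂ)) * Uᴴ)
    (sel : Fin Q → Fin K)
    (S : Matrix (Fin K) (Fin Q) ℂ)
    (hS : ∀ k q, S k q = if sel q = k then 1 else 0)
    (n : Fin K → ℕ)
    (hn : ∀ k, n k = (Finset.univ.filter fun q => sel q = k).card)
    (W : Matrix (Fin M) (Fin Q) ℂ) (hW : W = U * S) :
    (Sh - Sh * W * (Wᴴ * Sh * W + (σ2 : ℂ) • 1)⁻¹ * Wᴴ * Sh).trace =
      ((∑ k, lam k * σ2 / (n k * lam k + σ2) : ℝ) : ℂ) := by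
  have hσ' : (σ2 : ℂ) ≠ 0 := Complex.ofReal_ne_zero.mpr hσ.ne'
  set Λ : Matrix (Fin K) (Fin K) ℂ := Matrix.diagonal (fun k => (lam k : ℂ)) with hΛ
  set d : Fin K → ℝ := fun k => n k * lam k + σ2 with hd
  have hdpos : ∀ k, 0 < d k := by
    intro k
    have h1 := hlam k
    have h2 : (0:ℝ) ≤ (n k : ℝ) * lam k := by positivity
    simp only [hd]; linarith
  have hdC : ∀ k, (d k : ℂ) ≠ 0 := fun k => Complex.ofReal_ne_zero.mpr (hdpos k).ne'
  have hdcast : ∀ k, ((d k : ℝ) : ℂ) = (n k : ℂ) * (lam k : ℂ) + (σ2 : ℂ) := by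
    intro k; simp only [hd]; push_cast; ring
  have hnz : ∀ k, ((n k : ℂ) * (lam k : ℂ) + (σ2 : ℂ)) ≠ 0 := by
    intro k; rw [← hdcast k]; exact hdC k
  set c : Fin K → ℂ := fun k => (lam k : ℂ) / (d k : ℂ) with hc
  have hfrac : ∀ j : Fin K, (σ2:ℂ)⁻¹ * (1 - (n j:ℂ) * ((lam j:ℂ) / ((d j : ℝ):ℂ))) = (((d j:ℝ)):ℂ)⁻¹ := by
    intro j
    have h9 : (1:ℂ) - (n j:ℂ) * ((lam j:ℂ) / ((d j:ℝ):ℂ)) = (σ2:ℂ) / ((d j:ℝ):ℂ) := by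
      have e : (n j:ℂ) * ((lam j:ℂ) / ((d j:ℝ):ℂ)) = ((n j:ℂ) * (lam j:ℂ)) / ((d j:ℝ):ℂ) := by
        ring
      rw [e, eq_div_iff (hdC j), sub_mul, one_mul, div_mul_cancel₀ _ (hdC j), hdcast j]
      ring
    rw [h9, div_eq_mul_inv, ← mul_assoc, inv_mul_cancel₀ hσ', one_mul]
  set G : Matrix (Fin Q) (Fin Q) ℂ :=
    Matrix.of (fun q q' => (σ2:ℂ)⁻¹ *
      ((if q = q' then 1 else 0) - (if sel q' = sel q then c (sel q) else 0))) with hG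
  have key : ∀ (p : ℕ) (X : Matrix (Fin K) (Fin p) ℂ), Uᴴ * (U * X) = X := by
    intro p X
    rw [← Matrix.mul_assoc, hU, Matrix.one_mul]
  have hcount : ∀ k, (∑ q, (if sel q = k then (1:ℂ) else 0)) = (n k : ℂ) := by
    intro k
    rw [Finset.sum_boole, hn]
  -- key sum lemma over first index
  have hsum1 : ∀ (j : Fin K) (q' : Fin Q),
      (∑ r, (if sel r = j then (1:ℂ) else 0) * G r q')
        = if sel q' = j then ((d j : ℂ))⁻¹ else 0 := by
    intro j q'
    have hterm : ∀ r, (if sel r = j then (1:ℂ) else 0) * G r q'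
        = (σ2:ℂ)⁻¹ * ((if sel r = j then (1:ℂ) else 0) * (if r = q' then 1 else 0)
            - (if sel r = j then (1:ℂ) else 0) * (if sel q' = j then c j else 0)) := by
      intro r
      by_cases h : sel r = j
      · simp [hG, h]
      · simp [h]
    rw [Finset.sum_congr rfl (fun r _ => hterm r), ← Finset.mul_sum, Finset.sum_sub_distrib,
      ← Finset.sum_mul, hcount]
    have h1 : (∑ r, (if sel r = j then (1:ℂ) else 0) * (if r = q' then 1 else 0))
        = if sel q' = j then 1 else 0 := by
      rw [Finset.sum_eq_single q']
      · simp
      · intro b _ hb; simp [hb]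
      · simp
    rw [h1]
    by_cases h : sel q' = j
    · simp only [h, if_true, hc]
      exact hfrac j
    · simp [h]
  -- key sum lemma over second index
  have hsum2 : ∀ (k : Fin K) (q : Fin Q),
      (∑ q', G q q' * (if sel q' = k then (1:ℂ) else 0))
        = if sel q = k then ((d k : ℂ))⁻¹ else 0 := by
    intro k q
    have hterm : ∀ q', G q q' * (if sel q' = k then (1:ℂ) else 0)
        = (σ2:ℂ)⁻¹ * ((if q = q' then (1:ℂ) else 0) * (if sel q' = k then 1 else 0)
            - (if sel q' = k then (1:ℂ) else 0) * (if sel q = k then c k else 0)) := by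
      intro q'
      by_cases h : sel q' = k
      · subst h
        by_cases h2 : sel q' = sel q
        · simp [hG, h2]
        · have h2' : ¬ sel q = sel q' := fun e => h2 e.symm
          simp [hG, h2, h2']
      · simp [h]
    rw [Finset.sum_congr rfl (fun r _ => hterm r), ← Finset.mul_sum, Finset.sum_sub_distrib,
      ← Finset.sum_mul, hcount]
    have h1 : (∑ q', (if q = q' then (1:ℂ) else 0) * (if sel q' = k then 1 else 0))
        = if sel q = k then 1 else 0 := by
      rw [Finset.sum_eq_single q]
      · simp
      · intro b _ hb; simp [Ne.symm hb]
      · simp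
    rw [h1]
    by_cases h : sel q = k
    · simp only [h, if_true, hc]
      exact hfrac k
    · simp [h]
  -- A in explicit form
  have h1 : Wᴴ * Sh * W = Sᴴ * (Λ * S) := by
    rw [hW, hSh, Matrix.conjTranspose_mul]
    simp only [Matrix.mul_assoc]
    rw [key _ S, key _ (Λ * S)]
  have hent : ∀ q q', (Sᴴ * (Λ * S)) q q'
      = (if sel q' = sel q then (lam (sel q) : ℂ) else 0) := by
    intro q q'
    have hterm : ∀ k, star (S k q) * (Λ * S) k q'
        = (if sel q = k then (1:ℂ) else 0) * ((lam k : ℂ) * (if sel q' = k then 1 else 0)) := by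
      intro k
      rw [hΛ, Matrix.diagonal_mul, hS, hS]
      by_cases h : sel q = k <;> simp [h]
    rw [Matrix.mul_apply]
    simp only [Matrix.conjTranspose_apply]
    rw [Finset.sum_congr rfl (fun k _ => hterm k), Finset.sum_eq_single (sel q)]
    · simp
    · intro b _ hb; simp [Ne.symm hb]
    · simp
  have hA : Wᴴ * Sh * W + (σ2:ℂ) • 1 =
      Matrix.of (fun q q' => (if sel q' = sel q then (lam (sel q) : ℂ) else 0)
        + (if q = q' then (σ2:ℂ) else 0)) := by
    rw [h1]
    ext q q'
    simp only [Matrix.add_apply, Matrix.smul_apply, Matrix.one_apply, Matrix.of_apply,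
      hent, smul_eq_mul, mul_ite, mul_one, mul_zero]
  -- G is the right inverse
  have hAG : (Wᴴ * Sh * W + (σ2:ℂ) • 1) * G = 1 := by
    rw [hA]
    ext q q'
    rw [Matrix.mul_apply]
    have hterm : ∀ r, (Matrix.of (fun q q' => (if sel q' = sel q then (lam (sel q) : ℂ) else 0)
        + (if q = q' then (σ2:ℂ) else 0))) q r * G r q'
        = (lam (sel q) : ℂ) * ((if sel r = sel q then (1:ℂ) else 0) * G r q')
          + (if q = r then (1:ℂ) else 0) * ((σ2:ℂ) * G r q') := by
      intro r
      simp only [Matrix.of_apply]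
      by_cases h : sel r = sel q <;> by_cases h2 : q = r <;> simp [h, h2] <;> ring
    rw [Finset.sum_congr rfl (fun r _ => hterm r), Finset.sum_add_distrib, ← Finset.mul_sum,
      hsum1 (sel q) q']
    have h2 : (∑ r, (if q = r then (1:ℂ) else 0) * ((σ2:ℂ) * G r q'))
        = (σ2:ℂ) * G q q' := by
      rw [Finset.sum_eq_single q]
      · simp
      · intro b _ hb; simp [Ne.symm hb]
      · simp
    rw [h2]
    have hGv : (σ2:ℂ) * G q q' = (if q = q' then 1 else 0)
        - (if sel q' = sel q then c (sel q) else 0) := by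
      simp only [hG, Matrix.of_apply, ← mul_assoc, mul_inv_cancel₀ hσ', one_mul]
    rw [hGv, Matrix.one_apply]
    by_cases h : sel q' = sel q
    · simp only [h, if_true, hc, div_eq_mul_inv]
      ring
    · simp [h]
  have hGinv : (Wᴴ * Sh * W + (σ2:ℂ) • 1)⁻¹ = G := Matrix.inv_eq_right_inv hAG
  -- product form
  have hShW : Sh * W = U * (Λ * S) := by
    rw [hSh, hW]
    simp only [Matrix.mul_assoc]
    rw [key _ S]
  have hWSh : Wᴴ * Sh = Sᴴ * (Λ * Uᴴ) := by
    rw [hSh, hW, Matrix.conjTranspose_mul]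
    simp only [Matrix.mul_assoc]
    rw [key _ (Λ * Uᴴ)]
  have hprod : Sh * W * (Wᴴ * Sh * W + (σ2:ℂ) • 1)⁻¹ * Wᴴ * Sh
      = U * (Λ * (S * (G * (Sᴴ * (Λ * Uᴴ))))) := by
    rw [hGinv]
    have h3 : Sh * W * G * Wᴴ * Sh = (Sh * W) * G * (Wᴴ * Sh) := by
      simp only [Matrix.mul_assoc]
    rw [h3, hShW, hWSh]
    simp only [Matrix.mul_assoc]
  -- traces
  have htr1 : Sh.trace = ∑ k, (lam k : ℂ) := by
    rw [hSh, Matrix.trace_mul_cycle, hU, Matrix.one_mul, hΛ, Matrix.trace_diagonal]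
  have hmid : Λ * (S * (G * (Sᴴ * (Λ * Uᴴ)))) * U = Λ * (S * (G * (Sᴴ * Λ))) := by
    calc Λ * (S * (G * (Sᴴ * (Λ * Uᴴ)))) * U
        = Λ * (S * (G * (Sᴴ * (Λ * (Uᴴ * U))))) := by simp only [Matrix.mul_assoc]
      _ = _ := by rw [hU, Matrix.mul_one]
  have hSΛ : ∀ (q' : Fin Q) (j : Fin K),
      (Sᴴ * Λ) q' j = if sel q' = j then (lam j : ℂ) else 0 := by
    intro q' j
    rw [hΛ, Matrix.mul_diagonal, Matrix.conjTranspose_apply, hS]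
    by_cases h : sel q' = j <;> simp [h]
  have hdiagM : ∀ k, (Λ * (S * (G * (Sᴴ * Λ)))) k k
      = (lam k : ℂ) * ((n k : ℂ) * ((lam k : ℂ) * ((d k : ℂ))⁻¹)) := by
    intro k
    have hGcol : ∀ q, (G * (Sᴴ * Λ)) q k
        = (lam k : ℂ) * (if sel q = k then ((d k : ℂ))⁻¹ else 0) := by
      intro q
      rw [Matrix.mul_apply]
      have h4 : ∀ q', G q q' * (Sᴴ * Λ) q' k
          = (G q q' * (if sel q' = k then (1:ℂ) else 0)) * (lam k : ℂ) := by
        intro q'; rw [hSΛ]; by_cases h : sel q' = k <;> simp [h]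
      rw [Finset.sum_congr rfl (fun q' _ => h4 q'), ← Finset.sum_mul, hsum2 k q]
      ring
    simp only [hΛ, Matrix.diagonal_mul]
    rw [Matrix.mul_apply]
    have h5 : ∀ q, S k q * (G * (Sᴴ * Λ)) q k
        = ((lam k : ℂ) * ((d k : ℂ))⁻¹) * (if sel q = k then (1:ℂ) else 0) := by
      intro q; rw [hGcol, hS]; by_cases h : sel q = k <;> simp [h]
    rw [Finset.sum_congr rfl (fun q _ => h5 q), ← Finset.mul_sum, hcount]
    ring
  have htr2 : (U * (Λ * (S * (G * (Sᴴ * (Λ * Uᴴ)))))).trace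
      = ∑ k, (lam k : ℂ) * ((n k : ℂ) * ((lam k : ℂ) * ((d k : ℂ))⁻¹)) := by
    rw [Matrix.trace_mul_comm, hmid, Matrix.trace]
    exact Finset.sum_congr rfl (fun k _ => hdiagM k)
  rw [hprod, Matrix.trace_sub, htr1, htr2, Complex.ofReal_sum, ← Finset.sum_sub_distrib]
  refine Finset.sum_congr rfl (fun k _ => ?_)
  rw [Complex.ofReal_div, Complex.ofReal_mul, hdcast k]
  field_simp [hnz k]
  have hnz' : ((lam k : ℂ) * (n k : ℂ) + (σ2 : ℂ)) ≠ 0 := by rw [mul_comm]; exact hnz k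
  have hinv := mul_inv_cancel₀ hnz'
  linear_combination (-(lam k : ℂ)) * hinv
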